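/- Fix p ∈ (0,ς_*)^J and suppose the Leibniz rule holds for the Mixed Logit choice probabilities at p, i.e. (∂P_j/∂p_k)(p) = ∫ (∂P_j^L/∂p_k)(θ,p) dμ(θ) for all j,k. Then the Jacobian of P at p is (DP)(p) = Λ(p) − Γ(p), where Λ(p) is the diagonal matrix with entries λ_j(p) = ∫_{L(p_j)} (Dw_j)(θ,p_j) P_j^L(θ,p) dμ(θ) and Γ(p) is the J×J matrix with entries γ_{j,k}(p) = ∫_{L(p_j)∩L(p_k)} P_j^L(θ,p) P_k^L(θ,p) (Dw_k)(θ,p_k) dμ(θ); that is, (∂P_j/∂p_k)(p) = δ_{j,k} λ_j(p) − γ_{j,k}(p) for all j,k, where δ_{j,k} is the Kronecker delta. -/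

import Mathlib

open MeasureTheory

/-- If the Leibniz rule holds for the Mixed Logit choice
probabilities at `p`, then the Jacobian of `P` at `p` is `Λ(p) − Γ(p)`:
`(∂P_j/∂p_k)(p) = δ_{j,k} λ_j(p) − γ_{j,k}(p)`. -/
theorem stmt1 {J : ℕ} {T : Type*} [MeasurableSpace T]
    (μ : Measure T) [IsProbabilityMeasure μ]
    (w Dw : Fin J → T → ℝ → ℝ) (v : Fin J → T → ℝ)
    (ϑ : T → ℝ) (ς : T → EReal)
    (e : Fin J → T → ℝ → ℝ)
    (he : ∀ j θ q, e j θ q =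
      if (q : EReal) < ς θ then Real.exp (w j θ q + v j θ) else 0)
    (PL : Fin J → T → (Fin J → ℝ) → ℝ)
    (hPL : ∀ j θ r, PL j θ r = e j θ (r j) / (Real.exp (ϑ θ) + ∑ i, e i θ (r i)))
    (P : Fin J → (Fin J → ℝ) → ℝ)
    (hP : ∀ j r, P j r = ∫ θ, PL j θ r ∂μ)
    (p : Fin J → ℝ)
    (hp : ∀ j, 0 < p j ∧ (p j : EReal) < essSup ς μ)
    (hw : ∀ j, ∀ᵐ θ ∂μ, (p j : EReal) < ς θ →
      HasDerivAt (w j θ) (Dw j θ (p j)) (p j))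
    (lam : Fin J → ℝ)
    (hlam : ∀ j, lam j =
      ∫ θ in {θ | (p j : EReal) < ς θ}, Dw j θ (p j) * PL j θ p ∂μ)
    (hlamInt : ∀ j, IntegrableOn (fun θ => Dw j θ (p j) * PL j θ p)
      {θ | (p j : EReal) < ς θ} μ)
    (gam : Fin J → Fin J → ℝ)
    (hgam : ∀ j k, gam j k =
      ∫ θ in {θ | (p j : EReal) < ς θ ∧ (p k : EReal) < ς θ},
        PL j θ p * PL k θ p * Dw k θ (p k) ∂μ)
    (hgamInt : ∀ j k, IntegrableOn (fun θ => PL j θ p * PL k θ p * Dw k θ (p k))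
      {θ | (p j : EReal) < ς θ ∧ (p k : EReal) < ς θ} μ)
    (DPL : Fin J → Fin J → T → ℝ)
    -- the Leibniz rule : pointwise derivatives exist a.e. and may be passed
    -- through the integral defining the Mixed Logit choice probabilities
    (hLeib : ∀ j k,
      (∀ᵐ θ ∂μ, HasDerivAt (fun q => PL j θ (Function.update p k q)) (DPL j k θ) (p k)) ∧
      HasDerivAt (fun q => P j (Function.update p k q)) (∫ θ, DPL j k θ ∂μ) (p k)) :
    ∀ j k, HasDerivAt (fun q => P j (Function.update p k q))
      ((if j = k then lam j else 0) - gam j k) (p k) := by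
  intro j k
  -- basic positivity facts
  have he_nonneg : ∀ i θ q, 0 ≤ e i θ q := by
    intro i θ q; rw [he]; split
    · exact (Real.exp_pos _).le
    · exact le_rfl
  have hPL0 : ∀ i θ, ¬ ((p i : EReal) < ς θ) → PL i θ p = 0 := by
    intro i θ h
    rw [hPL]
    have : e i θ (p i) = 0 := by rw [he, if_neg h]
    rw [this, zero_div]
  -- integrability on the whole space
  have hlamI : ∀ i, Integrable (fun θ => Dw i θ (p i) * PL i θ p) μ := by
    intro i
    rw [← integrableOn_iff_integrable_of_support_subset (s := {θ | (p i : EReal) < ς θ})]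
    · exact hlamInt i
    · intro θ hθ
      by_contra h
      exact hθ (show Dw i θ (p i) * PL i θ p = 0 by rw [hPL0 i θ h, mul_zero])
  have hgamI : Integrable (fun θ => PL j θ p * PL k θ p * Dw k θ (p k)) μ := by
    rw [← integrableOn_iff_integrable_of_support_subset
      (s := {θ | (p j : EReal) < ς θ ∧ (p k : EReal) < ς θ})]
    · exact hgamInt j k
    · intro θ hθ
      by_contra h
      rw [Set.mem_setOf_eq, not_and_or] at h
      rcases h with h | h
      · exact hθ (show PL j θ p * PL k θ p * Dw k θ (p k) = 0 by
          rw [hPL0 j θ h, zero_mul, zero_mul])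
      · exact hθ (show PL j θ p * PL k θ p * Dw k θ (p k) = 0 by
          rw [hPL0 k θ h, mul_zero, zero_mul])
  -- set integrals are integrals
  have hlam' : ∀ i, lam i = ∫ θ, Dw i θ (p i) * PL i θ p ∂μ := by
    intro i
    rw [hlam]
    exact setIntegral_eq_integral_of_forall_compl_eq_zero
      (fun θ h => by rw [hPL0 i θ h, mul_zero])
  have hgam' : gam j k = ∫ θ, PL j θ p * PL k θ p * Dw k θ (p k) ∂μ := by
    rw [hgam]
    refine setIntegral_eq_integral_of_forall_compl_eq_zero (fun θ h => ?_)
    rw [Set.mem_setOf_eq, not_and_or] at h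
    rcases h with h | h
    · rw [hPL0 j θ h, zero_mul, zero_mul]
    · rw [hPL0 k θ h, mul_zero, zero_mul]
  -- the candidate derivative
  set g : T → ℝ := fun θ =>
    (if j = k then Dw j θ (p j) * PL j θ p else 0)
      - PL j θ p * PL k θ p * Dw k θ (p k) with hg
  -- a.e. identification of DPL with g
  have hae : ∀ᵐ θ ∂μ, DPL j k θ = g θ := by
    filter_upwards [(hLeib j k).1, hw k] with θ hder hwθ
    by_cases hc : (p k : EReal) < ς θ
    · -- differentiable case: compute the derivative of the quotient
      set C : ℝ := Real.exp (ϑ θ) + ∑ i ∈ Finset.univ.erase k, e i θ (p i) with hC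
      have hsum : ∀ q, Real.exp (ϑ θ) + ∑ i, e i θ (Function.update p k q i)
          = C + e k θ q := by
        intro q
        rw [hC]
        have : ∑ i, e i θ (Function.update p k q i)
            = e k θ q + ∑ i ∈ Finset.univ.erase k, e i θ (p i) := by
          rw [← Finset.add_sum_erase _ _ (Finset.mem_univ k)]
          congr 1
          · rw [Function.update_self]
          · exact Finset.sum_congr rfl fun i hi => by
              rw [Function.update_of_ne (Finset.ne_of_mem_erase hi)]
        rw [this]; ring
      have hCpos : 0 < C := by
        rw [hC]
        have : 0 ≤ ∑ i ∈ Finset.univ.erase k, e i θ (p i) :=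
          Finset.sum_nonneg fun i _ => he_nonneg i θ (p i)
        linarith [Real.exp_pos (ϑ θ)]
      have hDpos : ∀ q, 0 < C + e k θ q := fun q => by
        have := he_nonneg k θ q; linarith
      have hf : ∀ q, PL j θ (Function.update p k q)
          = (if j = k then e k θ q else e j θ (p j)) / (C + e k θ q) := by
        intro q
        rw [hPL, hsum]
        congr 1
        by_cases hjk : j = k
        · subst hjk; rw [if_pos rfl, Function.update_self]
        · rw [if_neg hjk, Function.update_of_ne hjk]
      -- derivative of e k θ at p k
      have hopen : ∀ᶠ q : ℝ in nhds (p k), (q : EReal) < ς θ := by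
        have : IsOpen {q : ℝ | (q : EReal) < ς θ} :=
          isOpen_Iio.preimage continuous_coe_real_ereal
        exact this.eventually_mem hc
      have heev : (fun q => e k θ q) =ᶠ[nhds (p k)]
          (fun q => Real.exp (w k θ q + v k θ)) := by
        filter_upwards [hopen] with q hq
        rw [he, if_pos hq]
      have hekval : e k θ (p k) = Real.exp (w k θ (p k) + v k θ) := by
        rw [he, if_pos hc]
      have he' : HasDerivAt (fun q => e k θ q)
          (Dw k θ (p k) * e k θ (p k)) (p k) := by
        have h1 : HasDerivAt (fun q => Real.exp (w k θ q + v k θ))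
            (Real.exp (w k θ (p k) + v k θ) * Dw k θ (p k)) (p k) :=
          ((hwθ hc).add_const _).exp
        have h2 := h1.congr_of_eventuallyEq heev
        rw [hekval, mul_comm]
        exact h2
      have hden : HasDerivAt (fun q => C + e k θ q)
          (Dw k θ (p k) * e k θ (p k)) (p k) := he'.const_add C
      have hnum : HasDerivAt (fun q => if j = k then e k θ q else e j θ (p j))
          (if j = k then Dw k θ (p k) * e k θ (p k) else 0) (p k) := by
        by_cases hjk : j = k
        · simpa [hjk] using he'
        · simpa [hjk] using hasDerivAt_const (p k) (e j θ (p j))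
      have hdiv := hnum.div hden (hDpos (p k)).ne'
      have hder2 : HasDerivAt (fun q => PL j θ (Function.update p k q))
          (((if j = k then Dw k θ (p k) * e k θ (p k) else 0) * (C + e k θ (p k))
            - (if j = k then e k θ (p k) else e j θ (p j))
              * (Dw k θ (p k) * e k θ (p k))) / (C + e k θ (p k)) ^ 2) (p k) :=
        hdiv.congr_of_eventuallyEq (Filter.Eventually.of_forall hf)
      have huniq := hder.unique hder2
      -- express PL values
      have hPLval : ∀ i, PL i θ p = e i θ (p i) / (C + e k θ (p k)) := by
        intro i
        rw [hPL]
        congr 1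
        have := hsum (p k)
        rw [Function.update_eq_self] at this
        exact this
      rw [huniq]
      simp only [hg]
      have hD := (hDpos (p k)).ne'
      by_cases hjk : j = k
      · subst hjk
        rw [if_pos rfl, if_pos rfl, hPLval]
        simp only [↓reduceIte]
        field_simp
      · simp only [if_neg hjk]
        rw [hPLval, hPLval]
        field_simp
        ring
    · -- non-differentiable-looking case: function is constant on Ici (p k)
      have hPLk0 : PL k θ p = 0 := hPL0 k θ hc
      have hg0 : g θ = 0 := by
        simp only [hg]
        by_cases hjk : j = k
        · subst hjk; rw [if_pos rfl, hPLk0]; ring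
        · rw [if_neg hjk, hPLk0]; ring
      rw [hg0]
      -- e k θ q = 0 for q ≥ p k
      have hek0 : ∀ q, p k ≤ q → e k θ q = 0 := by
        intro q hq
        rw [he, if_neg]
        intro hlt
        exact hc (lt_of_le_of_lt (by exact_mod_cast hq) hlt)
      have hconst : ∀ q ∈ Set.Ici (p k),
          PL j θ (Function.update p k q) = PL j θ p := by
        intro q hq
        rw [hPL, hPL]
        have h1 : e j θ (Function.update p k q j) = e j θ (p j) := by
          by_cases hjk : j = k
          · rw [hjk, Function.update_self, hek0 q hq, hek0 (p k) le_rfl]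
          · rw [Function.update_of_ne hjk]
        have h2 : ∑ i, e i θ (Function.update p k q i) = ∑ i, e i θ (p i) := by
          refine Finset.sum_congr rfl fun i _ => ?_
          by_cases hik : i = k
          · rw [hik, Function.update_self, hek0 q hq, hek0 (p k) le_rfl]
          · rw [Function.update_of_ne hik]
        rw [h1, h2]
      have h0 : HasDerivWithinAt (fun q => PL j θ (Function.update p k q)) 0
          (Set.Ici (p k)) (p k) := by
        refine (hasDerivWithinAt_const (p k) (Set.Ici (p k)) (PL j θ p)).congr
          hconst ?_
        rw [Function.update_eq_self]
      have hud : UniqueDiffWithinAt ℝ (Set.Ici (p k)) (p k) :=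
        uniqueDiffOn_Ici (p k) (p k) Set.self_mem_Ici
      have := hder.hasDerivWithinAt (s := Set.Ici (p k))
      rw [← this.derivWithin hud, ← h0.derivWithin hud]
  -- conclude
  have hint : ∫ θ, DPL j k θ ∂μ = (if j = k then lam j else 0) - gam j k := by
    rw [integral_congr_ae hae, hg, hgam']
    by_cases hjk : j = k
    · subst hjk
      simp only [if_pos rfl]
      rw [hlam' j]
      exact integral_sub (hlamI j) hgamI
    · simp only [if_neg hjk]
      rw [show (fun θ => (0:ℝ) - PL j θ p * PL k θ p * Dw k θ (p k))
          = fun θ => -(PL j θ p * PL k θ p * Dw k θ (p k)) by funext θ; ring,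
        integral_neg]
      ring
  have := (hLeib j k).2
  rwa [hint] at this
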